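/- Suppose the node c of G, of degree d, lies in the 1-shell of G, i.e., there is no subgraph H of G containing c in which every vertex of H has degree at least 2 within H. Then det(B − tI) = t^{2d} · det(B' − tI) for all real t, where B is the NB-matrix of G and B' is the NB-matrix of G − c. In particular, removing a node of the 1-shell does not change the nonzero eigenvalues (with multiplicity) of the NB-matrix. -/

import Mathlib

open Matrix

/-- The non-backtracking matrix of a simple graph `G`: rows and columns are indexed by
darts (directed edges); entry `(k→l, i→j)` is `δ_{jk} (1 - δ_{il})`. -/
def nbMatrix {V : Type*} [DecidableEq V] (G : SimpleGraph V) :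
    Matrix G.Dart G.Dart ℝ := fun r c =>
  (if c.toProd.2 = r.toProd.1 then (1 : ℝ) else 0) *
  (if c.toProd.1 = r.toProd.2 then 0 else 1)


instance {V : Type*} (G : SimpleGraph V) [DecidableRel G.Adj] (s : Set V) :
    DecidableRel (G.induce s).Adj := fun a b =>
  decidable_of_iff (G.Adj a b) Iff.rfl

lemma fixed_of_sameCycle {ι : Type*} {σ : Equiv.Perm ι} {s x : ι}
    (h : σ.SameCycle s x) (hx : σ x = x) : σ s = s := by
  obtain ⟨k, hk⟩ := h
  have h2 : (σ ^ k) x = x := Equiv.Perm.zpow_apply_eq_self_of_apply_eq_self hx k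
  have hsx : s = x := (σ ^ k).injective (by rw [hk, h2])
  rw [hsx, hx]

lemma det_sub_smul_one_eq {ι : Type*} [Fintype ι] [DecidableEq ι]
    (M : Matrix ι ι ℝ) (p : ι → Prop) [DecidablePred p]
    (hdiag : ∀ i, M i i = 0)
    (hcyc : ∀ (σ : Equiv.Perm ι) (s : ι), p s → σ s ≠ s →
      ¬ (∀ x, σ.SameCycle s x → M (σ x) x ≠ 0)) (t : ℝ) :
    (M - t • 1).det = (-t) ^ (Finset.univ.filter p).card *
      ((M.submatrix (Subtype.val : {i // ¬ p i} → ι) Subtype.val) -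
        t • (1 : Matrix {i // ¬ p i} {i // ¬ p i} ℝ)).det := by
  classical
  set N := M - t • (1 : Matrix ι ι ℝ) with hN
  set Ns := (M.submatrix (Subtype.val : {i // ¬ p i} → ι) Subtype.val) -
      t • (1 : Matrix {i // ¬ p i} {i // ¬ p i} ℝ) with hNs
  have hNoff : ∀ i j : ι, j ≠ i → N j i = M j i := by
    intro i j hji
    simp [hN, Matrix.sub_apply, Matrix.smul_apply, Matrix.one_apply_ne hji]
  have hNdiag : ∀ i : ι, N i i = -t := by
    intro i
    simp [hN, Matrix.sub_apply, Matrix.smul_apply, Matrix.one_apply_eq, hdiag i]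
  have hNNs : ∀ a b : {i // ¬ p i}, N a.val b.val = Ns a b := by
    intro a b
    by_cases h : a = b
    · subst h; rw [hNdiag]
      simp [hNs, Matrix.sub_apply, Matrix.smul_apply, Matrix.one_apply_eq,
        Matrix.submatrix_apply, hdiag]
    · rw [hNoff _ _ (fun hv => h (Subtype.ext hv))]
      simp [hNs, Matrix.sub_apply, Matrix.smul_apply, Matrix.one_apply_ne h,
        Matrix.submatrix_apply]
  have hfix : ∀ σ : Equiv.Perm ι, (∃ s, p s ∧ σ s ≠ s) → ∏ i, N (σ i) i = 0 := by
    rintro σ ⟨s, hs, hss⟩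
    by_contra hprod
    have hall : ∀ i, N (σ i) i ≠ 0 := by
      intro i hi
      exact hprod (Finset.prod_eq_zero (Finset.mem_univ i) hi)
    refine hcyc σ s hs hss fun x hx => ?_
    have hxfix : σ x ≠ x := fun h => hss (fixed_of_sameCycle hx h)
    have := hall x
    rwa [hNoff x (σ x) hxfix] at this
  have hdet : N.det = ∑ σ ∈ Finset.univ.filter (fun σ : Equiv.Perm ι => ∀ i, p i → σ i = i),
      Equiv.Perm.sign σ • ∏ i, N (σ i) i := by
    rw [Matrix.det_apply]
    refine (Finset.sum_filter_of_ne ?_).symm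
    intro σ _ hne
    by_contra hmov
    push_neg at hmov
    obtain ⟨s, hs, hss⟩ := hmov
    exact hne (by rw [hfix σ ⟨s, hs, hss⟩, smul_zero])
  have hofs : ∀ (σ : Equiv.Perm ι) (hσ : σ ∈ Finset.univ.filter
        (fun σ : Equiv.Perm ι => ∀ i, p i → σ i = i))
      (hpres : ∀ x, ¬ p (σ x) ↔ ¬ p x),
      Equiv.Perm.ofSubtype (σ.subtypePerm (p := fun i => ¬ p i) hpres) = σ := by
    intro σ hσ hpres
    ext x
    by_cases hx : p x
    · rw [Equiv.Perm.ofSubtype_apply_of_not_mem (p := fun i => ¬ p i) _ (not_not_intro hx)]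
      exact ((Finset.mem_filter.mp hσ).2 x hx).symm
    · exact Equiv.Perm.ofSubtype_apply_of_mem (p := fun i => ¬ p i) _ hx
  have key : ∑ σ ∈ Finset.univ.filter (fun σ : Equiv.Perm ι => ∀ i, p i → σ i = i),
        Equiv.Perm.sign σ • ∏ i, N (σ i) i
      = ∑ τ : Equiv.Perm {i // ¬ p i},
        Equiv.Perm.sign (Equiv.Perm.ofSubtype τ) • ∏ i, N (Equiv.Perm.ofSubtype τ i) i := by
    refine Finset.sum_bij' (fun σ hσ => σ.subtypePerm (p := fun i => ¬ p i) ?_)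
      (fun τ _ => Equiv.Perm.ofSubtype τ) ?_ ?_ ?_ ?_ ?_
    · intro x
      have hσ' := (Finset.mem_filter.mp hσ).2
      rw [iff_comm]
      constructor
      · intro hx hpx
        have h1 : σ (σ x) = σ x := hσ' (σ x) hpx
        have h2 : σ x = x := σ.injective h1
        rw [h2] at hpx
        exact hx hpx
      · intro hx hpx
        rw [hσ' x hpx] at hx
        exact hx hpx
    · intro σ hσ; exact Finset.mem_univ _
    · intro τ _
      refine Finset.mem_filter.mpr ⟨Finset.mem_univ _, fun i hi => ?_⟩
      exact Equiv.Perm.ofSubtype_apply_of_not_mem (p := fun i => ¬ p i) τ (not_not_intro hi)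
    · intro σ hσ
      exact hofs σ hσ _
    · intro τ _
      exact Equiv.Perm.subtypePerm_ofSubtype τ
    · intro σ hσ
      rw [hofs σ hσ _]
  have term : ∀ τ : Equiv.Perm {i // ¬ p i},
      (Equiv.Perm.sign (Equiv.Perm.ofSubtype τ) • ∏ i, N (Equiv.Perm.ofSubtype τ i) i : ℝ)
      = (-t) ^ (Finset.univ.filter p).card *
        (Equiv.Perm.sign τ • ∏ i : {i // ¬ p i}, Ns (τ i) i) := by
    intro τ
    rw [Equiv.Perm.sign_ofSubtype]
    rw [← Finset.prod_filter_mul_prod_filter_not Finset.univ p]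
    have h1 : ∏ i ∈ Finset.univ.filter p, N (Equiv.Perm.ofSubtype τ i) i
        = (-t) ^ (Finset.univ.filter p).card := by
      rw [Finset.prod_congr rfl (fun i hi => ?_), Finset.prod_const]
      have hpi := (Finset.mem_filter.mp hi).2
      rw [Equiv.Perm.ofSubtype_apply_of_not_mem (p := fun i => ¬ p i) τ (not_not_intro hpi),
        hNdiag]
    have h2 : ∏ i ∈ Finset.univ.filter (fun i => ¬ p i), N (Equiv.Perm.ofSubtype τ i) i
        = ∏ i : {i // ¬ p i}, Ns (τ i) i := by
      rw [Finset.prod_subtype (p := fun i => ¬ p i) (Finset.univ.filter (fun i => ¬ p i))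
        (fun x => by simp) (fun i => N (Equiv.Perm.ofSubtype τ i) i)]
      apply Finset.prod_congr rfl
      intro x _
      rw [Equiv.Perm.ofSubtype_apply_coe, hNNs]
    rw [h1, h2, mul_smul_comm]
  rw [hdet, key, Finset.sum_congr rfl (fun τ _ => term τ), ← Finset.mul_sum,
    Matrix.det_apply]
lemma nbMatrix_diag {V : Type*} [DecidableEq V] (G : SimpleGraph V) (r : G.Dart) :
    nbMatrix G r r = 0 := by
  by_cases h : r.toProd.1 = r.toProd.2
  · simp [nbMatrix, h]
  · simp [nbMatrix, h, fun hh : r.toProd.2 = r.toProd.1 => h hh.symm]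

lemma nbMatrix_ne_zero {V : Type*} [DecidableEq V] (G : SimpleGraph V) {r c : G.Dart}
    (h : nbMatrix G r c ≠ 0) :
    c.toProd.2 = r.toProd.1 ∧ c.toProd.1 ≠ r.toProd.2 := by
  by_cases h1 : c.toProd.2 = r.toProd.1
  · by_cases h2 : c.toProd.1 = r.toProd.2
    · exfalso; apply h; simp [nbMatrix, h2]
    · exact ⟨h1, h2⟩
  · exfalso; apply h; simp [nbMatrix, h1]

lemma nb_hcyc {V : Type*} [Fintype V] [DecidableEq V] (G : SimpleGraph V) (c : V)
    (hshell : ¬ ∃ H : G.Subgraph, c ∈ H.verts ∧ ∀ v ∈ H.verts, 2 ≤ (H.neighborSet v).ncard)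
    (σ : Equiv.Perm G.Dart) (s : G.Dart) (hs : s.toProd.1 = c ∨ s.toProd.2 = c)
    (hss : σ s ≠ s) :
    ¬ (∀ x, σ.SameCycle s x → nbMatrix G (σ x) x ≠ 0) := by
  intro h
  have h' : ∀ x, σ.SameCycle s x →
      x.toProd.2 = (σ x).toProd.1 ∧ x.toProd.1 ≠ (σ x).toProd.2 :=
    fun x hx => nbMatrix_ne_zero G (h x hx)
  let H : G.Subgraph :=
    { verts := {v | ∃ x, σ.SameCycle s x ∧ (v = x.toProd.1 ∨ v = x.toProd.2)}
      Adj := fun a b => ∃ x, σ.SameCycle s x ∧ ((a, b) = x.toProd ∨ (b, a) = x.toProd)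
      adj_sub := by
        rintro a b ⟨x, hx, hab | hab⟩
        · have := x.adj; rw [← hab] at this; exact this
        · have := x.adj.symm; rw [← hab] at this; exact this
      edge_vert := by
        rintro a b ⟨x, hx, hab | hab⟩
        · exact ⟨x, hx, Or.inl (Prod.ext_iff.mp hab).1⟩
        · exact ⟨x, hx, Or.inr (Prod.ext_iff.mp hab).2⟩
      symm := by
        constructor
        rintro a b ⟨x, hx, hab⟩
        exact ⟨x, hx, hab.symm⟩ }
  refine hshell ⟨H, ?_, ?_⟩
  · rcases hs with h1 | h1
    · exact ⟨s, Equiv.Perm.SameCycle.refl σ s, Or.inl h1.symm⟩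
    · exact ⟨s, Equiv.Perm.SameCycle.refl σ s, Or.inr h1.symm⟩
  · rintro v ⟨x, hx, hv | hv⟩
    · -- v = x.1 ; neighbors x.2 and (σ⁻¹ x).1
      have hsy : σ.SameCycle s (σ⁻¹ x) := Equiv.Perm.sameCycle_symm_apply_right.mpr hx
      have hyx : σ (σ⁻¹ x) = x := σ.apply_symm_apply x
      obtain ⟨hy1, hy2⟩ := h' (σ⁻¹ x) hsy
      rw [hyx] at hy1 hy2
      have mem1 : x.toProd.2 ∈ H.neighborSet v :=
        ⟨x, hx, Or.inl (Prod.ext_iff.mpr ⟨hv, rfl⟩)⟩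
      have mem2 : (σ⁻¹ x).toProd.1 ∈ H.neighborSet v :=
        ⟨σ⁻¹ x, hsy, Or.inr (Prod.ext_iff.mpr ⟨rfl, (hy1.trans hv.symm).symm⟩)⟩
      have hne : x.toProd.2 ≠ (σ⁻¹ x).toProd.1 := fun hh => hy2 hh.symm
      have := (Set.one_lt_ncard_iff (Set.toFinite _)).mpr ⟨_, _, mem1, mem2, hne⟩
      omega
    · -- v = x.2 ; neighbors x.1 and (σ x).2
      have hsy : σ.SameCycle s (σ x) := Equiv.Perm.SameCycle.apply_right hx
      obtain ⟨h1, h2⟩ := h' x hx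
      have mem1 : x.toProd.1 ∈ H.neighborSet v :=
        ⟨x, hx, Or.inr (Prod.ext_iff.mpr ⟨rfl, hv⟩)⟩
      have mem2 : (σ x).toProd.2 ∈ H.neighborSet v :=
        ⟨σ x, hsy, Or.inl (Prod.ext_iff.mpr ⟨hv.trans h1, rfl⟩)⟩
      have := (Set.one_lt_ncard_iff (Set.toFinite _)).mpr ⟨_, _, mem1, mem2, h2⟩
      omega
section pieces
variable {V : Type*} [Fintype V] [DecidableEq V] (G : SimpleGraph V) [DecidableRel G.Adj] (c : V)

lemma card_darts_at :
    (Finset.univ.filter fun d : G.Dart => d.toProd.1 = c ∨ d.toProd.2 = c).card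
      = 2 * G.degree c := by
  rw [Finset.filter_or, Finset.card_union_of_disjoint]
  · have h1 : (Finset.univ.filter fun d : G.Dart => d.toProd.1 = c).card = G.degree c :=
      G.dart_fst_fiber_card_eq_degree c
    have h2 : (Finset.univ.filter fun d : G.Dart => d.toProd.2 = c).card
        = (Finset.univ.filter fun d : G.Dart => d.toProd.1 = c).card := by
      refine Finset.card_nbij' (fun d => d.symm) (fun d => d.symm) ?_ ?_ ?_ ?_
      · intro d hd
        simp only [Finset.mem_coe, Finset.mem_filter, Finset.mem_univ, true_and] at hd ⊢
        exact hd
      · intro d hd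
        simp only [Finset.mem_coe, Finset.mem_filter, Finset.mem_univ, true_and] at hd ⊢
        exact hd
      · intro d _; exact d.symm_symm
      · intro d _; exact d.symm_symm
    rw [h1, h2, h1]; ring
  · rw [Finset.disjoint_left]
    intro d hd1 hd2
    simp only [Finset.mem_filter, Finset.mem_univ, true_and] at hd1 hd2
    exact d.adj.ne (hd1.trans hd2.symm)

def dartEquiv : {d : G.Dart // ¬ (d.toProd.1 = c ∨ d.toProd.2 = c)}
    ≃ (G.induce {v | v ≠ c}).Dart where
  toFun d := ⟨(⟨d.1.toProd.1, fun h => d.2 (Or.inl h)⟩,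
               ⟨d.1.toProd.2, fun h => d.2 (Or.inr h)⟩), d.1.adj⟩
  invFun e := ⟨⟨(e.toProd.1.val, e.toProd.2.val), e.adj⟩, by
    rintro (h | h)
    · exact e.toProd.1.2 h
    · exact e.toProd.2.2 h⟩
  left_inv d := rfl
  right_inv e := rfl

lemma nb_entry (r s : {d : G.Dart // ¬ (d.toProd.1 = c ∨ d.toProd.2 = c)}) :
    nbMatrix G r.val s.val
      = nbMatrix (G.induce {v | v ≠ c}) (dartEquiv G c r) (dartEquiv G c s) := by
  simp [nbMatrix, dartEquiv, Subtype.ext_iff]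

lemma charpoly_eval' {n : Type*} [Fintype n] [DecidableEq n] (M : Matrix n n ℝ) (t : ℝ) :
    M.charpoly.eval t = (t • (1 : Matrix n n ℝ) - M).det := by
  have h := RingHom.map_det (Polynomial.evalRingHom t) (Matrix.charmatrix M)
  rw [Matrix.charpoly]
  rw [show Polynomial.eval t (Matrix.charmatrix M).det
      = (Polynomial.evalRingHom t) (Matrix.charmatrix M).det from rfl, h]
  congr 1
  ext i j
  by_cases hij : i = j
  · subst hij
    simp [Matrix.charmatrix_apply_eq, Matrix.map_apply, Matrix.sub_apply,
      Matrix.smul_apply, Matrix.one_apply_eq]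
  · simp [Matrix.charmatrix_apply_ne _ _ _ hij, Matrix.map_apply, Matrix.sub_apply,
      Matrix.smul_apply, Matrix.one_apply_ne hij]

end pieces

open Polynomial in
theorem det_nbMatrix_removeOneShell {V : Type*} [Fintype V] [DecidableEq V]
    (G : SimpleGraph V) [DecidableRel G.Adj] (c : V)
    (hshell : ¬ ∃ H : G.Subgraph, c ∈ H.verts ∧ ∀ v ∈ H.verts, 2 ≤ (H.neighborSet v).ncard) :
    (∀ t : ℝ, (nbMatrix G - t • 1).det =
        t ^ (2 * G.degree c) * (nbMatrix (G.induce {v | v ≠ c}) - t • 1).det) ∧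
      ∀ μ : ℂ, μ ≠ 0 →
        ((nbMatrix G).charpoly.map (algebraMap ℝ ℂ)).rootMultiplicity μ =
          ((nbMatrix (G.induce {v | v ≠ c})).charpoly.map (algebraMap ℝ ℂ)).rootMultiplicity μ := by
  classical
  have part1 : ∀ t : ℝ, (nbMatrix G - t • 1).det =
      t ^ (2 * G.degree c) * (nbMatrix (G.induce {v | v ≠ c}) - t • 1).det := by
    intro t
    have hmain := det_sub_smul_one_eq (nbMatrix G)
      (fun d : G.Dart => d.toProd.1 = c ∨ d.toProd.2 = c) (nbMatrix_diag G)
      (fun σ s hs hss => nb_hcyc G c hshell σ s hs hss) t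
    rw [hmain, card_darts_at G c]
    have hsub : (nbMatrix G).submatrix
          (Subtype.val : {d : G.Dart // ¬ (d.toProd.1 = c ∨ d.toProd.2 = c)} → G.Dart)
          Subtype.val - t • 1
        = ((nbMatrix (G.induce {v | v ≠ c}) - t • 1).submatrix
            (dartEquiv G c) (dartEquiv G c)) := by
      ext a b
      by_cases hab : a = b
      · subst hab
        simp [Matrix.submatrix_apply, Matrix.sub_apply, Matrix.smul_apply,
          Matrix.one_apply_eq, nb_entry G c a a]
      · simp [Matrix.submatrix_apply, Matrix.sub_apply, Matrix.smul_apply,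
          Matrix.one_apply_ne hab,
          Matrix.one_apply_ne (fun h => hab ((dartEquiv G c).injective h)),
          nb_entry G c a b]
    rw [hsub, Matrix.det_submatrix_equiv_self, Even.neg_pow (even_two_mul _)]
  refine ⟨part1, ?_⟩
  have hcard' : Fintype.card (G.induce {v | v ≠ c}).Dart
      = (Finset.univ.filter fun d : G.Dart => ¬ (d.toProd.1 = c ∨ d.toProd.2 = c)).card := by
    rw [← Fintype.card_congr (dartEquiv G c)]
    exact Fintype.card_subtype _
  have hcard : Fintype.card G.Dart
      = 2 * G.degree c + Fintype.card (G.induce {v | v ≠ c}).Dart := by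
    rw [hcard', ← card_darts_at G c]
    rw [← Finset.card_univ (α := G.Dart), ← Finset.card_filter_add_card_filter_not
      (s := (Finset.univ : Finset G.Dart))
      (p := fun d : G.Dart => d.toProd.1 = c ∨ d.toProd.2 = c)]
  have hpoly : (nbMatrix G).charpoly
      = X ^ (2 * G.degree c) * (nbMatrix (G.induce {v | v ≠ c})).charpoly := by
    apply Polynomial.funext
    intro t
    have e1 : (nbMatrix G - t • 1).det
        = (-1 : ℝ) ^ (Fintype.card G.Dart) * (nbMatrix G).charpoly.eval t := by
      rw [charpoly_eval', ← neg_sub, Matrix.det_neg]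
    have e2 : (nbMatrix (G.induce {v | v ≠ c}) - t • 1).det
        = (-1 : ℝ) ^ (Fintype.card (G.induce {v | v ≠ c}).Dart)
          * (nbMatrix (G.induce {v | v ≠ c})).charpoly.eval t := by
      rw [charpoly_eval', ← neg_sub, Matrix.det_neg]
    have h := part1 t
    rw [e1, e2] at h
    have hsign : ((-1 : ℝ)) ^ (Fintype.card G.Dart)
        = (-1 : ℝ) ^ (Fintype.card (G.induce {v | v ≠ c}).Dart) := by
      rw [hcard, pow_add, Even.neg_one_pow (even_two_mul _), one_mul]
    rw [hsign] at h
    have hne : ((-1 : ℝ)) ^ (Fintype.card (G.induce {v | v ≠ c}).Dart) ≠ 0 :=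
      pow_ne_zero _ (by norm_num)
    rw [Polynomial.eval_mul, Polynomial.eval_pow, Polynomial.eval_X]
    apply mul_left_cancel₀ hne
    rw [h]; ring
  intro μ hμ
  have hmap : (nbMatrix G).charpoly.map (algebraMap ℝ ℂ)
      = X ^ (2 * G.degree c)
        * (nbMatrix (G.induce {v | v ≠ c})).charpoly.map (algebraMap ℝ ℂ) := by
    rw [hpoly, Polynomial.map_mul, Polynomial.map_pow, Polynomial.map_X]
  rw [hmap]
  have hq : ((nbMatrix (G.induce {v | v ≠ c})).charpoly.map (algebraMap ℝ ℂ)) ≠ 0 :=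
    ((Matrix.charpoly_monic _).map _).ne_zero
  rw [Polynomial.rootMultiplicity_mul
    (mul_ne_zero (pow_ne_zero _ Polynomial.X_ne_zero) hq)]
  have h0 : Polynomial.rootMultiplicity μ ((X : ℂ[X]) ^ (2 * G.degree c)) = 0 := by
    apply Polynomial.rootMultiplicity_eq_zero
    simp [Polynomial.IsRoot, hμ]
  rw [h0, zero_add]
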